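/- Scalar model of Theorem 1 (single-mode third-order conservation): let q : [0,T) → ℝ be C⁴ and nonvanishing, ξ ∈ ℝⁿ, and w : [0,T) → ℂ a C² solution of w'' + (|ξ|²/q²)w = 0. Define 𝔈(t) := α₀|ξ|⁴(|w'|² + (|ξ|²/q²)|w|²) + α₁|ξ|²(|w'|² + (|ξ|²/q²)|w|²) + β₀|ξ|⁴Re(conj(w)w') + β₁|ξ|²Re(conj(w)w') + γ₀|ξ|²|w'|², where α₀ = q, β₀ = -q', γ₀ = -(1/2)q²q'', α₁ = (1/4)q(q'²/2 + qq''), β₁ = -(1/4)(q'³/2 - qq'q'' - q²q'''). Then d/dt 𝔈(t) = β₁'(t)·|ξ|²·Re(conj(w(t))·w'(t)). -/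

import Mathlib

open Set
set_option maxHeartbeats 2000000

theorem stmt_18 {n : ℕ} (T : ℝ) (hT : 0 < T)
    (q q1 q2 q3 q4 β₁' : ℝ → ℝ) (ξ : EuclideanSpace ℝ (Fin n))
    (w w' w'' : ℝ → ℂ)
    (hq : ∀ t ∈ Ico (0:ℝ) T, HasDerivAt q (q1 t) t)
    (hq1 : ∀ t ∈ Ico (0:ℝ) T, HasDerivAt q1 (q2 t) t)
    (hq2 : ∀ t ∈ Ico (0:ℝ) T, HasDerivAt q2 (q3 t) t)
    (hq3 : ∀ t ∈ Ico (0:ℝ) T, HasDerivAt q3 (q4 t) t)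
    (hq4cont : ContinuousOn q4 (Ico (0:ℝ) T))
    (hqne : ∀ t ∈ Ico (0:ℝ) T, q t ≠ 0)
    (hw : ∀ t ∈ Ico (0:ℝ) T, HasDerivAt w (w' t) t)
    (hw' : ∀ t ∈ Ico (0:ℝ) T, HasDerivAt w' (w'' t) t)
    (hode : ∀ t ∈ Ico (0:ℝ) T,
      w'' t = -((‖ξ‖^2 / (q t)^2 : ℝ) : ℂ) * w t)
    (hβ : ∀ t ∈ Ico (0:ℝ) T,
      HasDerivAt (fun t =>
        -(1/4) * ((q1 t)^3/2 - q t * q1 t * q2 t - (q t)^2 * q3 t)) (β₁' t) t) :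
    ∀ t ∈ Ico (0:ℝ) T,
      HasDerivAt
        (fun t =>
          q t * ‖ξ‖^4 * (Complex.normSq (w' t) + (‖ξ‖^2 / (q t)^2) * Complex.normSq (w t))
          + ((1/4) * q t * ((q1 t)^2/2 + q t * q2 t)) * ‖ξ‖^2 *
              (Complex.normSq (w' t) + (‖ξ‖^2 / (q t)^2) * Complex.normSq (w t))
          + (-(q1 t)) * ‖ξ‖^4 * ((starRingEnd ℂ) (w t) * w' t).re
          + (-(1/4) * ((q1 t)^3/2 - q t * q1 t * q2 t - (q t)^2 * q3 t)) * ‖ξ‖^2 *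
              ((starRingEnd ℂ) (w t) * w' t).re
          + (-(1/2) * (q t)^2 * q2 t) * ‖ξ‖^2 * Complex.normSq (w' t))
        (β₁' t * ‖ξ‖^2 * ((starRingEnd ℂ) (w t) * w' t).re) t := by
  intro t ht
  have hqt := hq t ht
  have hq1t := hq1 t ht
  have hq2t := hq2 t ht
  have hq3t := hq3 t ht
  have hne := hqne t ht
  -- real/imaginary parts
  have hA : HasDerivAt (fun s => (w s).re) ((w' t).re) t := by
    exact (Complex.reCLM.hasFDerivAt.comp_hasDerivAt t (hw t ht))
  have hB : HasDerivAt (fun s => (w s).im) ((w' t).im) t := by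
    exact (Complex.imCLM.hasFDerivAt.comp_hasDerivAt t (hw t ht))
  have hA' : HasDerivAt (fun s => (w' s).re) ((w'' t).re) t := by
    exact (Complex.reCLM.hasFDerivAt.comp_hasDerivAt t (hw' t ht))
  have hB' : HasDerivAt (fun s => (w' s).im) ((w'' t).im) t := by
    exact (Complex.imCLM.hasFDerivAt.comp_hasDerivAt t (hw' t ht))
  have hA'' : (w'' t).re = -(‖ξ‖^2 / (q t)^2) * (w t).re := by
    rw [hode t ht, neg_mul, Complex.neg_re, Complex.re_ofReal_mul]; ring
  have hB'' : (w'' t).im = -(‖ξ‖^2 / (q t)^2) * (w t).im := by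
    rw [hode t ht, neg_mul, Complex.neg_im, Complex.im_ofReal_mul]; ring
  -- quadratic quantities
  have hN0 : HasDerivAt (fun s => (w s).re * (w s).re + (w s).im * (w s).im)
      ((w' t).re * (w t).re + (w t).re * (w' t).re
        + ((w' t).im * (w t).im + (w t).im * (w' t).im)) t := (hA.mul hA).add (hB.mul hB)
  have hN1 : HasDerivAt (fun s => (w' s).re * (w' s).re + (w' s).im * (w' s).im)
      ((w'' t).re * (w' t).re + (w' t).re * (w'' t).re
        + ((w'' t).im * (w' t).im + (w' t).im * (w'' t).im)) t := (hA'.mul hA').add (hB'.mul hB')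
  have hR : HasDerivAt (fun s => (w s).re * (w' s).re + (w s).im * (w' s).im)
      ((w' t).re * (w' t).re + (w t).re * (w'' t).re
        + ((w' t).im * (w' t).im + (w t).im * (w'' t).im)) t := (hA.mul hA').add (hB.mul hB')
  have hkq : HasDerivAt (fun s => ‖ξ‖^2 / (q s)^2)
      ((0 * (q t)^2 - ‖ξ‖^2 * ((2:ℕ) * q t ^ (2-1) * q1 t)) / ((q t)^2)^2) t :=
    (hasDerivAt_const t (‖ξ‖^2)).div (hqt.pow 2) (pow_ne_zero 2 hne)
  -- β₁' value
  have hc4 : HasDerivAt (fun s =>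
      -(1/4) * ((q1 s)^3/2 - q s * q1 s * q2 s - (q s)^2 * q3 s))
      (-(1/4) * (((3:ℕ) * q1 t ^ (3-1) * q2 t) / 2
        - ((q1 t * q1 t + q t * q2 t) * q2 t + q t * q1 t * q3 t)
        - (((2:ℕ) * q t ^ (2-1) * q1 t) * q3 t + (q t)^2 * q4 t))) t :=
    ((((hq1t.pow 3).div_const 2).sub (((hqt.mul hq1t)).mul hq2t)).sub
      ((hqt.pow 2).mul (hq3 t ht))).const_mul (-(1/4))
  have hβval : β₁' t = -(1/4) * (((3:ℕ) * q1 t ^ (3-1) * q2 t) / 2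
        - ((q1 t * q1 t + q t * q2 t) * q2 t + q t * q1 t * q3 t)
        - (((2:ℕ) * q t ^ (2-1) * q1 t) * q3 t + (q t)^2 * q4 t)) :=
    (hβ t ht).unique hc4
  -- build the derivative of the real-form function
  have T1 := (hqt.mul_const (‖ξ‖^4)).mul (hN1.add (hkq.mul hN0))
  have T2 := ((((hqt.const_mul (1/4)).mul
      (((hq1t.pow 2).div_const 2).add (hqt.mul hq2t))).mul_const (‖ξ‖^2)).mul
      (hN1.add (hkq.mul hN0)))
  have T3 := ((hq1t.neg).mul_const (‖ξ‖^4)).mul hR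
  have T4 := (hc4.mul_const (‖ξ‖^2)).mul hR
  have T5 := ((((hqt.pow 2).const_mul (-(1/2))).mul hq2t).mul_const (‖ξ‖^2)).mul hN1
  have H := (((T1.add T2).add T3).add T4).add T5
  have hFG : (fun t =>
          q t * ‖ξ‖^4 * (Complex.normSq (w' t) + (‖ξ‖^2 / (q t)^2) * Complex.normSq (w t))
          + ((1/4) * q t * ((q1 t)^2/2 + q t * q2 t)) * ‖ξ‖^2 *
              (Complex.normSq (w' t) + (‖ξ‖^2 / (q t)^2) * Complex.normSq (w t))
          + (-(q1 t)) * ‖ξ‖^4 * ((starRingEnd ℂ) (w t) * w' t).re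
          + (-(1/4) * ((q1 t)^3/2 - q t * q1 t * q2 t - (q t)^2 * q3 t)) * ‖ξ‖^2 *
              ((starRingEnd ℂ) (w t) * w' t).re
          + (-(1/2) * (q t)^2 * q2 t) * ‖ξ‖^2 * Complex.normSq (w' t)) =
      (fun s =>
          q s * ‖ξ‖^4 * (((w' s).re * (w' s).re + (w' s).im * (w' s).im)
            + (‖ξ‖^2 / (q s)^2) * ((w s).re * (w s).re + (w s).im * (w s).im))
          + (1/4 * q s * ((q1 s)^2/2 + q s * q2 s)) * ‖ξ‖^2 *
              (((w' s).re * (w' s).re + (w' s).im * (w' s).im)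
            + (‖ξ‖^2 / (q s)^2) * ((w s).re * (w s).re + (w s).im * (w s).im))
          + (-(q1 s)) * ‖ξ‖^4 * ((w s).re * (w' s).re + (w s).im * (w' s).im)
          + (-(1/4) * ((q1 s)^3/2 - q s * q1 s * q2 s - (q s)^2 * q3 s)) * ‖ξ‖^2 *
              ((w s).re * (w' s).re + (w s).im * (w' s).im)
          + (-(1/2) * (q s)^2 * q2 s) * ‖ξ‖^2 *
              ((w' s).re * (w' s).re + (w' s).im * (w' s).im)) := by
    funext s
    simp [Complex.normSq_apply, Complex.mul_re, Complex.conj_re, Complex.conj_im]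
  rw [hFG]
  convert H using 1
  case e'_4 => rfl
  case e'_5 => rfl
  case e'_8 => rfl
  simp only [Pi.add_apply, Pi.mul_apply, Pi.neg_apply, Pi.pow_apply]
  rw [hβval, hA'', hB'']
  have hRe : ((starRingEnd ℂ) (w t) * w' t).re
      = (w t).re * (w' t).re + (w t).im * (w' t).im := by
    simp [Complex.mul_re, Complex.conj_re, Complex.conj_im]
  rw [hRe]
  field_simp
  ring
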